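/- Let {U_1, ..., U_n} be a sunflower of convex open sets in R^d with center U, where n ≥ d+1, and choose points p_i ∈ U_i for 1 ≤ i ≤ n. Then the convex hull of {p_1, ..., p_n} intersects U. -/
import Mathlib

open Set Pointwise

section Aux

variable {E : Type*} [NormedAddCommGroup E] [NormedSpace ℝ E]

private lemma mem_iff_gauge_lt_one {s : Set E} (hs₁ : Convex ℝ s) (hs₀ : (0:E) ∈ s)
    (hs₂ : IsOpen s) {x : E} : x ∈ s ↔ gauge s x < 1 := by
  conv_lhs => rw [← gauge_lt_one_eq_self_of_isOpen hs₁ hs₀ hs₂]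
  rfl

set_option maxHeartbeats 1000000 in
/-- Three-petal sunflower lemma: a point of `P` on a segment between a point of `U`
and a point of `Q` lies in the common center `C`. -/
private lemma sunflower_three {P U Q C : Set E}
    (hPc : Convex ℝ P) (hPo : IsOpen P) (hUc : Convex ℝ U) (hUo : IsOpen U)
    (hQc : Convex ℝ Q) (hQo : IsOpen Q)
    (hPU : P ∩ U = C) (hPQ : P ∩ Q = C) (hUQ : U ∩ Q = C)
    (hC0 : (0:E) ∈ C) {b b' z : E}
    (hb : b ∈ U) (hb' : b' ∈ Q) (hz : z ∈ P) (hseg : z ∈ segment ℝ b b') :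
    z ∈ C := by
  have hCP : C ⊆ P := by rw [← hPU]; exact inter_subset_left
  have hCU : C ⊆ U := by rw [← hPU]; exact inter_subset_right
  have hCQ : C ⊆ Q := by rw [← hUQ]; exact inter_subset_right
  have h0P : (0:E) ∈ P := hCP hC0
  have h0U : (0:E) ∈ U := hCU hC0
  have h0Q : (0:E) ∈ Q := hCQ hC0
  have hmemP : ∀ x : E, x ∈ P ↔ gauge P x < 1 := fun x => mem_iff_gauge_lt_one hPc h0P hPo
  have hmemU : ∀ x : E, x ∈ U ↔ gauge U x < 1 := fun x => mem_iff_gauge_lt_one hUc h0U hUo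
  have hmemQ : ∀ x : E, x ∈ Q ↔ gauge Q x < 1 := fun x => mem_iff_gauge_lt_one hQc h0Q hQo
  have hPz : gauge P z < 1 := (hmemP z).1 hz
  by_cases h1 : gauge U z < 1 ∧ gauge Q z < 1
  · rw [← hUQ]; exact ⟨(hmemU z).2 h1.1, (hmemQ z).2 h1.2⟩
  exfalso
  -- key claim, used symmetrically
  have key : ∀ S T : Set E, Convex ℝ S → IsOpen S → Convex ℝ T → IsOpen T →
      S ∩ T = C → P ∩ S = C → P ∩ T = C → 1 ≤ gauge T z → gauge T z ≤ gauge S z := by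
    intro S T hSc hSo hTc hTo hST hPS hPT hT1
    by_contra hlt
    push_neg at hlt
    have hTpos : (0:ℝ) < gauge T z := lt_of_lt_of_le one_pos hT1
    have hCS : C ⊆ S := by rw [← hPS]; exact inter_subset_right
    have hCT : C ⊆ T := by rw [← hPT]; exact inter_subset_right
    set v := (gauge T z)⁻¹ • z with hv
    have hvT : gauge T v = 1 := by
      rw [hv, gauge_smul_of_nonneg (inv_nonneg.2 hTpos.le), smul_eq_mul,
        inv_mul_cancel₀ hTpos.ne']
    have hvS : gauge S v < 1 := by
      rw [hv, gauge_smul_of_nonneg (inv_nonneg.2 hTpos.le), smul_eq_mul,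
        inv_mul_lt_iff₀ hTpos, mul_one]
      exact hlt
    have hvP : gauge P v < 1 := by
      rw [hv, gauge_smul_of_nonneg (inv_nonneg.2 hTpos.le), smul_eq_mul,
        inv_mul_lt_iff₀ hTpos, mul_one]
      exact lt_of_lt_of_le hPz hT1
    have hvC : v ∈ C := by
      rw [← hPS]
      exact ⟨(hmemP v).2 hvP, (mem_iff_gauge_lt_one hSc (hCS hC0) hSo).2 hvS⟩
    have := (mem_iff_gauge_lt_one hTc (hCT hC0) hTo).1 (hCT hvC)
    rw [hvT] at this
    exact lt_irrefl _ this
  -- establish equal gauges `T ≥ 1`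
  have hmain : 1 ≤ gauge U z ∧ gauge U z = gauge Q z := by
    rcases le_or_gt 1 (gauge Q z) with hQ1 | hQ1
    · have h1' := key U Q hUc hUo hQc hQo hUQ hPU hPQ hQ1
      have hU1 : 1 ≤ gauge U z := le_trans hQ1 h1'
      have h2' := key Q U hQc hQo hUc hUo (by rw [inter_comm]; exact hUQ) hPQ hPU hU1
      exact ⟨hU1, le_antisymm h2' h1'⟩
    · have hU1 : 1 ≤ gauge U z := le_of_not_gt fun hlt => h1 ⟨hlt, hQ1⟩
      have h2' := key Q U hQc hQo hUc hUo (by rw [inter_comm]; exact hUQ) hPQ hPU hU1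
      linarith
  obtain ⟨hU1, heq⟩ := hmain
  set T := gauge U z with hT
  have hTpos : (0:ℝ) < T := lt_of_lt_of_le one_pos hU1
  have hTinv1 : T⁻¹ ≤ 1 := by
    rw [inv_le_one_iff₀]; right; exact hU1
  set y := T⁻¹ • z with hy
  have hyP : y ∈ P := by
    rw [hmemP, hy, gauge_smul_of_nonneg (inv_nonneg.2 hTpos.le), smul_eq_mul]
    calc T⁻¹ * gauge P z ≤ 1 * gauge P z := by
          exact mul_le_mul_of_nonneg_right hTinv1 (gauge_nonneg _)
      _ < 1 := by rw [one_mul]; exact hPz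
  obtain ⟨δ, hδ, hball⟩ := Metric.isOpen_iff.1 hPo y hyP
  obtain ⟨θ₁, θ₂, hθ₁, hθ₂, hθsum, hzeq⟩ := hseg
  set r : ℝ := ‖b - y‖ + ‖b' - y‖ + 1 with hr
  have hrpos : (0:ℝ) < r := by positivity
  set ε : ℝ := min 1 (δ / r) / 2 with hε
  have hε0 : (0:ℝ) < ε := by
    have : (0:ℝ) < min 1 (δ / r) := lt_min one_pos (by positivity)
    positivity
  have hε1 : ε < 1 := by
    have h := min_le_left 1 (δ / r)
    rw [hε]; linarith
  have hεr : ε * r < δ := by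
    have h := min_le_right 1 (δ / r)
    have h2 : ε < δ / r := by rw [hε]; nlinarith [lt_min one_pos (show (0:ℝ) < δ/r by positivity)]
    calc ε * r < (δ / r) * r := by exact mul_lt_mul_of_pos_right h2 hrpos
      _ = δ := by field_simp
  have hεb : ε * ‖b - y‖ < δ := by
    nlinarith [norm_nonneg (b' - y), norm_nonneg (b - y)]
  have hεb' : ε * ‖b' - y‖ < δ := by
    nlinarith [norm_nonneg (b' - y), norm_nonneg (b - y)]
  have haU : Absorbent ℝ U := absorbent_nhds_zero (hUo.mem_nhds h0U)
  have haQ : Absorbent ℝ Q := absorbent_nhds_zero (hQo.mem_nhds h0Q)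
  have hgUy : gauge U y = 1 := by
    rw [hy, gauge_smul_of_nonneg (inv_nonneg.2 hTpos.le), smul_eq_mul]
    exact inv_mul_cancel₀ hTpos.ne'
  have hgQy : gauge Q y = 1 := by
    rw [hy, gauge_smul_of_nonneg (inv_nonneg.2 hTpos.le), smul_eq_mul, ← heq]
    exact inv_mul_cancel₀ hTpos.ne'
  -- the two perturbed points
  set w : E := y + ε • (b - y) with hw
  set w' : E := y + ε • (b' - y) with hw'
  have hwP : w ∈ P := by
    apply hball
    rw [Metric.mem_ball, dist_eq_norm, hw]
    simp only [add_sub_cancel_left]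
    rw [norm_smul, Real.norm_eq_abs, abs_of_pos hε0]
    exact hεb
  have hw'P : w' ∈ P := by
    apply hball
    rw [Metric.mem_ball, dist_eq_norm, hw']
    simp only [add_sub_cancel_left]
    rw [norm_smul, Real.norm_eq_abs, abs_of_pos hε0]
    exact hεb'
  have hwU : w ∈ U := by
    rw [hmemU]
    have hrep : w = (1 - ε) • y + ε • b := by rw [hw]; module
    calc gauge U w ≤ gauge U ((1-ε) • y) + gauge U (ε • b) := by
          rw [hrep]; exact gauge_add_le hUc haU _ _
      _ = (1-ε) * gauge U y + ε * gauge U b := by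
          rw [gauge_smul_of_nonneg (by linarith : (0:ℝ) ≤ 1 - ε),
            gauge_smul_of_nonneg hε0.le, smul_eq_mul, smul_eq_mul]
      _ < (1-ε) * 1 + ε * 1 := by
          rw [hgUy]
          have : gauge U b < 1 := (hmemU b).1 hb
          nlinarith
      _ = 1 := by ring
  have hw'Q : w' ∈ Q := by
    rw [hmemQ]
    have hrep : w' = (1 - ε) • y + ε • b' := by rw [hw']; module
    calc gauge Q w' ≤ gauge Q ((1-ε) • y) + gauge Q (ε • b') := by
          rw [hrep]; exact gauge_add_le hQc haQ _ _
      _ = (1-ε) * gauge Q y + ε * gauge Q b' := by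
          rw [gauge_smul_of_nonneg (by linarith : (0:ℝ) ≤ 1 - ε),
            gauge_smul_of_nonneg hε0.le, smul_eq_mul, smul_eq_mul]
      _ < (1-ε) * 1 + ε * 1 := by
          rw [hgQy]
          have : gauge Q b' < 1 := (hmemQ b').1 hb'
          nlinarith
      _ = 1 := by ring
  have hwC : w ∈ C := by rw [← hPU]; exact ⟨hwP, hwU⟩
  have hw'C : w' ∈ C := by rw [← hPQ]; exact ⟨hw'P, hw'Q⟩
  have hCc : Convex ℝ C := by rw [← hUQ]; exact hUc.inter hQc
  have hw''C : θ₁ • w + θ₂ • w' ∈ C := hCc hwC hw'C hθ₁ hθ₂ hθsum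
  have hrep2 : θ₁ • w + θ₂ • w' = ((1-ε) * T⁻¹ + ε) • z := by
    have h1 : θ₁ • w + θ₂ • w' =
        (θ₁ + θ₂) • ((1-ε) • y) + ε • (θ₁ • b + θ₂ • b') := by
      rw [hw, hw']; module
    rw [h1, hθsum, hzeq, one_smul, hy, smul_smul, ← add_smul]
  have hge : 1 ≤ gauge U (θ₁ • w + θ₂ • w') := by
    have hco : (0:ℝ) ≤ (1-ε) * T⁻¹ + ε := by
      have h1 := inv_nonneg.2 hTpos.le
      nlinarith
    rw [hrep2, gauge_smul_of_nonneg hco, smul_eq_mul]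
    have hinv : T⁻¹ * T = 1 := inv_mul_cancel₀ hTpos.ne'
    nlinarith
  have hlt : gauge U (θ₁ • w + θ₂ • w') < 1 := (hmemU _).1 (hCU hw''C)
  linarith

private lemma isOpen_convexJoin {E : Type*} [NormedAddCommGroup E] [NormedSpace ℝ E]
    {s t : Set E} (hs : IsOpen s) (ht : IsOpen t) :
    IsOpen (convexJoin ℝ s t) := by
  rw [isOpen_iff_forall_mem_open]
  intro x hx
  rw [mem_convexJoin] at hx
  obtain ⟨p, hp, q, hq, θ₁, θ₂, hθ₁, hθ₂, hsum, hxeq⟩ := hx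
  by_cases hθ : θ₁ = 0
  · refine ⟨t, subset_convexJoin_right ⟨p, hp⟩, ht, ?_⟩
    have hx' : x = q := by
      subst hθ; rw [zero_add] at hsum; rw [← hxeq, hsum]; simp
    rwa [hx']
  · refine ⟨(fun u => θ₁ • u + θ₂ • q) '' s, ?_, ?_, ⟨p, hp, hxeq⟩⟩
    · rintro - ⟨u, hu, rfl⟩
      rw [mem_convexJoin]
      exact ⟨u, hu, q, hq, θ₁, θ₂, hθ₁, hθ₂, hsum, rfl⟩
    · have hcomp : (fun u : E => θ₁ • u + θ₂ • q) =
          (fun v : E => v + θ₂ • q) ∘ (fun u : E => θ₁ • u) := by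
        ext u; simp
      rw [hcomp, Set.image_comp]
      exact (isOpenMap_add_right (θ₂ • q)) _ ((isOpenMap_smul₀ hθ) _ hs)

private lemma isOpen_hull_biUnion {E : Type*} [NormedAddCommGroup E] [NormedSpace ℝ E]
    {n : ℕ} {U : Fin n → Set E} (hconv : ∀ i, Convex ℝ (U i)) (hopen : ∀ i, IsOpen (U i))
    (hne : ∀ i, (U i).Nonempty) (I : Finset (Fin n)) :
    IsOpen (convexHull ℝ (⋃ i ∈ I, U i)) := by
  induction I using Finset.induction_on with
  | empty => simp
  | @insert a s ha ih =>
    rw [Finset.set_biUnion_insert]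
    rcases s.eq_empty_or_nonempty with rfl | hs
    · simp only [Finset.notMem_empty, iUnion_of_empty, iUnion_empty, union_empty]
      rw [(hconv a).convexHull_eq]
      exact hopen a
    · obtain ⟨j, hj⟩ := hs
      have htne : (⋃ i ∈ s, U i).Nonempty := ⟨(hne j).choose, mem_biUnion hj (hne j).choose_spec⟩
      rw [convexHull_union (hne a) htne, (hconv a).convexHull_eq]
      exact isOpen_convexJoin (hopen a) ih

private lemma lemmaB {E : Type*} [NormedAddCommGroup E] [NormedSpace ℝ E]
    {n : ℕ} {U : Fin n → Set E} (hconv : ∀ i, Convex ℝ (U i)) (hopen : ∀ i, IsOpen (U i))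
    (h0 : (0:E) ∈ ⋂ k, U k) (hsun : ∀ i j, i ≠ j → U i ∩ U j = ⋂ k, U k) :
    ∀ (N : ℕ) (I J : Finset (Fin n)), I.card + J.card ≤ N → I.Nonempty → J.Nonempty →
      Disjoint I J → ∀ z, z ∈ convexHull ℝ (⋃ i ∈ I, U i) →
      z ∈ convexHull ℝ (⋃ j ∈ J, U j) → z ∈ ⋂ k, U k := by
  have hU0 : ∀ i, (0:E) ∈ U i := fun i => (mem_iInter.1 h0) i
  have hUne : ∀ i, (U i).Nonempty := fun i => ⟨0, hU0 i⟩
  have hsingle : ∀ k : Fin n, convexHull ℝ (⋃ i ∈ ({k} : Finset (Fin n)), U i) = U k := by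
    intro k
    rw [show (⋃ i ∈ ({k} : Finset (Fin n)), U i) = U k by simp]
    exact (hconv k).convexHull_eq
  have hCsub : ∀ (K : Finset (Fin n)), K.Nonempty →
      (⋂ k, U k) ⊆ convexHull ℝ (⋃ i ∈ K, U i) := by
    rintro K ⟨k, hk⟩
    refine subset_trans ?_ (subset_convexHull ℝ _)
    intro x hx
    exact mem_biUnion hk (mem_iInter.1 hx k)
  intro N
  induction N with
  | zero =>
    intro I J hcard hIne
    have := hIne.card_pos
    omega
  | succ N ih =>
    have main : ∀ (I J : Finset (Fin n)), I.card + J.card ≤ N + 1 → I.Nonempty → J.Nonempty →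
        Disjoint I J → 2 ≤ J.card → ∀ z, z ∈ convexHull ℝ (⋃ i ∈ I, U i) →
        z ∈ convexHull ℝ (⋃ j ∈ J, U j) → z ∈ ⋂ k, U k := by
      intro I J hcard hIne hJne hdisj hJ2 z hzI hzJ
      obtain ⟨j0, hj0⟩ := hJne
      have hj0I : j0 ∉ I := Finset.disjoint_right.1 hdisj hj0
      have hJ'card : (J.erase j0).card = J.card - 1 := Finset.card_erase_of_mem hj0
      have hJ'ne : (J.erase j0).Nonempty := Finset.card_pos.1 (by omega)
      have hIcard := hIne.card_pos
      -- the three pairwise intersection identities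
      have hPU : convexHull ℝ (⋃ i ∈ I, U i) ∩ U j0 = ⋂ k, U k := by
        apply Subset.antisymm
        · rintro x ⟨hxP, hxU⟩
          refine ih I {j0} (by simp; omega) hIne (Finset.singleton_nonempty j0)
            (Finset.disjoint_singleton_right.2 hj0I) x hxP ?_
          rw [hsingle j0]; exact hxU
        · intro x hx
          exact ⟨hCsub I hIne hx, mem_iInter.1 hx j0⟩
      have hPQ : convexHull ℝ (⋃ i ∈ I, U i) ∩ convexHull ℝ (⋃ j ∈ J.erase j0, U j)
          = ⋂ k, U k := by
        apply Subset.antisymm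
        · rintro x ⟨hxP, hxQ⟩
          exact ih I (J.erase j0) (by omega) hIne hJ'ne
            (hdisj.mono_right (Finset.erase_subset _ _)) x hxP hxQ
        · intro x hx
          exact ⟨hCsub I hIne hx, hCsub _ hJ'ne hx⟩
      have hUQ : U j0 ∩ convexHull ℝ (⋃ j ∈ J.erase j0, U j) = ⋂ k, U k := by
        apply Subset.antisymm
        · rintro x ⟨hxU, hxQ⟩
          refine ih {j0} (J.erase j0) (by simp; omega) (Finset.singleton_nonempty j0) hJ'ne
            (Finset.disjoint_singleton_left.2 (Finset.notMem_erase j0 J)) x ?_ hxQ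
          rw [hsingle j0]; exact hxU
        · intro x hx
          exact ⟨mem_iInter.1 hx j0, hCsub _ hJ'ne hx⟩
      -- decompose z
      have hzJ' : z ∈ convexJoin ℝ (U j0) (convexHull ℝ (⋃ j ∈ J.erase j0, U j)) := by
        have hJeq : (⋃ j ∈ J, U j) = U j0 ∪ ⋃ j ∈ J.erase j0, U j := by
          conv_lhs => rw [← Finset.insert_erase hj0]
          rw [Finset.set_biUnion_insert]
        rw [hJeq] at hzJ
        have htne : (⋃ j ∈ J.erase j0, U j).Nonempty := by
          obtain ⟨j1, hj1⟩ := hJ'ne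
          exact ⟨0, mem_biUnion hj1 (hU0 j1)⟩
        rw [convexHull_union (hUne j0) htne, (hconv j0).convexHull_eq] at hzJ
        exact hzJ
      rw [mem_convexJoin] at hzJ'
      obtain ⟨b, hbU, b', hb'Q, hseg⟩ := hzJ'
      exact sunflower_three (convex_convexHull ℝ _)
        (isOpen_hull_biUnion hconv hopen hUne I) (hconv j0) (hopen j0)
        (convex_convexHull ℝ _) (isOpen_hull_biUnion hconv hopen hUne (J.erase j0))
        hPU hPQ hUQ h0 hbU hb'Q hzI hseg
    intro I J hcard hIne hJne hdisj z hzI hzJ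
    by_cases hJ2 : 2 ≤ J.card
    · exact main I J hcard hIne hJne hdisj hJ2 z hzI hzJ
    by_cases hI2 : 2 ≤ I.card
    · exact main J I (by omega) hJne hIne hdisj.symm hI2 z hzJ hzI
    -- base case: both singletons
    have hIcard : I.card = 1 := by have := hIne.card_pos; omega
    have hJcard : J.card = 1 := by have := hJne.card_pos; omega
    obtain ⟨i, rfl⟩ := Finset.card_eq_one.1 hIcard
    obtain ⟨j, rfl⟩ := Finset.card_eq_one.1 hJcard
    have hij : i ≠ j := by
      intro h
      subst h
      simp at hdisj
    rw [hsingle i] at hzI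
    rw [hsingle j] at hzJ
    rw [← hsun i j hij]
    exact ⟨hzI, hzJ⟩

end Aux

/-- Corollary 2.2: if `{U 0, …, U (n-1)}` is a sunflower of convex open sets in `ℝ^d` with
center `⋂ k, U k`, where `n ≥ d + 1`, and `p i ∈ U i` for each `i`, then the convex hull of
the points `p i` intersects the center. -/
theorem sunflower_convexHull (d n : ℕ) (hn : d + 1 ≤ n)
    (U : Fin n → Set (EuclideanSpace ℝ (Fin d)))
    (hconv : ∀ i, Convex ℝ (U i)) (hopen : ∀ i, IsOpen (U i))
    (hcenter : (⋂ k, U k).Nonempty)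
    (hsun : ∀ i j, i ≠ j → U i ∩ U j = ⋂ k, U k)
    (p : Fin n → EuclideanSpace ℝ (Fin d)) (hp : ∀ i, p i ∈ U i) :
    (convexHull ℝ (Set.range p) ∩ ⋂ k, U k).Nonempty := by
  classical
  obtain ⟨c, hc⟩ := hcenter
  set V : Fin n → Set (EuclideanSpace ℝ (Fin d)) := fun i => (fun x => x + c) ⁻¹' U i with hV
  have hVconv : ∀ i, Convex ℝ (V i) := fun i => (hconv i).translate_preimage_left c
  have hVopen : ∀ i, IsOpen (V i) := fun i => (hopen i).preimage (continuous_add_right c)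
  have hV0 : (0 : EuclideanSpace ℝ (Fin d)) ∈ ⋂ k, V k := by
    refine mem_iInter.2 fun k => ?_
    show (0 : EuclideanSpace ℝ (Fin d)) + c ∈ U k
    rw [zero_add]
    exact mem_iInter.1 hc k
  have hVsun : ∀ i j, i ≠ j → V i ∩ V j = ⋂ k, V k := by
    intro i j hij
    show (fun x => x + c) ⁻¹' (U i) ∩ (fun x => x + c) ⁻¹' (U j) = ⋂ k, V k
    rw [← preimage_inter, hsun i j hij, preimage_iInter]
  set p' : Fin n → EuclideanSpace ℝ (Fin d) := fun i => p i - c with hp'def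
  have hp' : ∀ i, p' i ∈ V i := by
    intro i
    show p i - c + c ∈ U i
    rw [sub_add_cancel]
    exact hp i
  -- the `n + 1` points `c, p 0, …, p (n-1)` translated by `-c`
  set f : Option (Fin n) → EuclideanSpace ℝ (Fin d) := fun o => o.elim 0 p' with hf
  have hnotaff : ¬ AffineIndependent ℝ f := by
    intro haff
    have hcard := haff.card_le_finrank_succ
    have h1 : Fintype.card (Option (Fin n)) = n + 1 := by simp
    have h2 : Module.finrank ℝ (vectorSpan ℝ (Set.range f)) ≤ d := by
      have := Submodule.finrank_le (vectorSpan ℝ (Set.range f))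
      rwa [finrank_euclideanSpace_fin] at this
    omega
  obtain ⟨M, q, hqM, hqMc⟩ := Convex.radon_partition hnotaff
  -- the point `q` lies in the convex hull of the translated points `p'`
  have hq_hull : q ∈ convexHull ℝ (Set.range p') := by
    rcases em (none ∈ M) with hnone | hnone
    · refine convexHull_mono ?_ hqMc
      rintro - ⟨o, ho, rfl⟩
      cases o with
      | none => exact absurd hnone ho
      | some i => exact ⟨i, rfl⟩
    · refine convexHull_mono ?_ hqM
      rintro - ⟨o, ho, rfl⟩
      cases o with
      | none => exact absurd ho hnone
      | some i => exact ⟨i, rfl⟩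
  -- the point `q` lies in the translated center
  have hq_center : q ∈ ⋂ k, V k := by
    by_cases hM1 : ∃ i : Fin n, some i ∈ M
    · by_cases hM2 : ∃ i : Fin n, some i ∉ M
      · -- main case : apply the key combinatorial lemma
        set I₁ : Finset (Fin n) := Finset.univ.filter (fun i => some i ∈ M) with hI₁
        set I₂ : Finset (Fin n) := Finset.univ.filter (fun i => some i ∉ M) with hI₂
        obtain ⟨i1, hi1⟩ := hM1
        obtain ⟨i2, hi2⟩ := hM2
        have hI₁ne : I₁.Nonempty := ⟨i1, Finset.mem_filter.2 ⟨Finset.mem_univ i1, hi1⟩⟩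
        have hI₂ne : I₂.Nonempty := ⟨i2, Finset.mem_filter.2 ⟨Finset.mem_univ i2, hi2⟩⟩
        have hdisj : Disjoint I₁ I₂ := by
          rw [Finset.disjoint_left]
          intro a ha ha'
          rw [hI₁, Finset.mem_filter] at ha
          rw [hI₂, Finset.mem_filter] at ha'
          exact ha'.2 ha.2
        have hsub1 : f '' M ⊆ ⋃ i ∈ I₁, V i := by
          rintro - ⟨o, ho, rfl⟩
          cases o with
          | none =>
            exact mem_biUnion hI₁ne.choose_spec ((mem_iInter.1 hV0) _)
          | some i =>
            exact mem_biUnion (Finset.mem_filter.2 ⟨Finset.mem_univ i, ho⟩) (hp' i)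
        have hsub2 : f '' Mᶜ ⊆ ⋃ i ∈ I₂, V i := by
          rintro - ⟨o, ho, rfl⟩
          cases o with
          | none =>
            exact mem_biUnion hI₂ne.choose_spec ((mem_iInter.1 hV0) _)
          | some i =>
            exact mem_biUnion (Finset.mem_filter.2 ⟨Finset.mem_univ i, ho⟩) (hp' i)
        exact lemmaB hVconv hVopen hV0 hVsun (I₁.card + I₂.card) I₁ I₂ le_rfl hI₁ne hI₂ne
          hdisj q (convexHull_mono hsub1 hqM) (convexHull_mono hsub2 hqMc)
      · -- `Mᶜ ⊆ {none}` : then `q = 0`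
        push_neg at hM2
        have hMc : f '' Mᶜ ⊆ {0} := by
          rintro - ⟨o, ho, rfl⟩
          cases o with
          | none => rfl
          | some i => exact absurd (hM2 i) ho
        have : q ∈ convexHull ℝ ({0} : Set (EuclideanSpace ℝ (Fin d))) :=
          convexHull_mono hMc hqMc
        rw [convexHull_singleton] at this
        rw [this]
        exact hV0
    · -- `M ⊆ {none}` : then `q = 0`
      push_neg at hM1
      have hM : f '' M ⊆ {0} := by
        rintro - ⟨o, ho, rfl⟩
        cases o with
        | none => rfl
        | some i => exact absurd ho (hM1 i)
      have : q ∈ convexHull ℝ ({0} : Set (EuclideanSpace ℝ (Fin d))) :=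
        convexHull_mono hM hqM
      rw [convexHull_singleton] at this
      rw [this]
      exact hV0
  -- translate back
  have hrange : Set.range p' = (-c) +ᵥ Set.range p := by
    ext x
    constructor
    · rintro ⟨i, rfl⟩
      exact ⟨p i, ⟨i, rfl⟩, by simp [hp'def, sub_eq_neg_add]⟩
    · rintro ⟨y, ⟨i, rfl⟩, rfl⟩
      exact ⟨i, by simp [hp'def, sub_eq_neg_add]⟩
  rw [hrange, convexHull_vadd] at hq_hull
  obtain ⟨y, hy, hyq⟩ := hq_hull
  refine ⟨q + c, ?_, ?_⟩
  · have : y = q + c := by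
      have : -c + y = q := hyq
      rw [← this]
      abel
    rwa [← this]
  · refine mem_iInter.2 fun k => ?_
    exact mem_iInter.1 hq_center k
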